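/- One-dimensional counterexample to weak unique continuation: Let s ∈ (0,1) and h > 0. Then there exist a sequence u = {u_j}_{j∈ℤ} ∈ ℓ_s, not identically zero, and a bounded sequence V = {V_j}_{j∈ℤ} such that (−Δ_d)^s u_j = V_j u_j for all j ∈ ℤ, while u_j = 0 for all j ∈ {−1,0,1}. -/

import Mathlib

open scoped BigOperators

/-- The explicit one-dimensional discrete kernel `K_s^h(m)`, with `K_s^h(0) = 0`. -/
noncomputable def Ks1 (h s : ℝ) (m : ℤ) : ℝ :=
  if m = 0 then 0
  else (4 ^ s * Real.Gamma (1 / 2 + s) / (Real.sqrt Real.pi * |Real.Gamma (-s)|)) *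
    (Real.Gamma ((m.natAbs : ℝ) - s) / (h ^ (2 * s) * Real.Gamma ((m.natAbs : ℝ) + 1 + s)))

/-- Membership in the one-dimensional space `ℓ_s`. -/
def memLs1 (s : ℝ) (u : ℤ → ℝ) : Prop :=
  Summable fun m : ℤ => |u m| * (1 + (m.natAbs : ℝ)) ^ (-(1 + 2 * s))

/-- The one-dimensional fractional discrete Laplacian. -/
noncomputable def fracLap1 (h s : ℝ) (u : ℤ → ℝ) (j : ℤ) : ℝ :=
  ∑' m : ℤ, (u j - u m) * Ks1 h s (j - m)

namespace WUCP1

set_option linter.unusedSectionVars false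

noncomputable def Cc (s : ℝ) : ℝ :=
  4 ^ s * Real.Gamma (1 / 2 + s) / (Real.sqrt Real.pi * |Real.Gamma (-s)|)

lemma Cc_pos {s : ℝ} (hs0 : 0 < s) (hs1 : s < 1) : 0 < Cc s := by
  apply div_pos
  · exact mul_pos (Real.rpow_pos_of_pos (by norm_num) s)
      (Real.Gamma_pos_of_pos (by linarith))
  · refine mul_pos (Real.sqrt_pos.mpr Real.pi_pos) (abs_pos.mpr ?_)
    apply Real.Gamma_ne_zero
    intro m
    rcases m with _ | m
    · simp; linarith
    · intro hc
      have hm : (0:ℝ) ≤ (m:ℕ) := Nat.cast_nonneg m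
      push_cast at hc
      linarith

lemma Ks1_neg (h s : ℝ) (m : ℤ) : Ks1 h s (-m) = Ks1 h s m := by
  simp [Ks1, Int.natAbs_neg, neg_eq_zero]

lemma Ks1_succ_eq (h s : ℝ) (n : ℕ) :
    Ks1 h s ((n:ℤ)+1) = Cc s *
      (Real.Gamma ((n:ℝ) + 1 - s) / (h ^ (2*s) * Real.Gamma ((n:ℝ) + 2 + s))) := by
  have h0 : ((n:ℤ)+1) ≠ 0 := by omega
  have h1 : (((n:ℤ)+1).natAbs : ℝ) = (n:ℝ) + 1 := by
    have : ((n:ℤ)+1).natAbs = n + 1 := by omega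
    rw [this]; push_cast; ring
  unfold Ks1 Cc
  rw [if_neg h0, h1]
  ring_nf

lemma Ks1_succ_pos {h s : ℝ} (hh : 0 < h) (hs0 : 0 < s) (hs1 : s < 1) (n : ℕ) :
    0 < Ks1 h s ((n:ℤ)+1) := by
  rw [Ks1_succ_eq]
  apply mul_pos (Cc_pos hs0 hs1)
  apply div_pos
  · apply Real.Gamma_pos_of_pos; have : (0:ℝ) ≤ n := Nat.cast_nonneg n; linarith
  · exact mul_pos (Real.rpow_pos_of_pos hh _)
      (Real.Gamma_pos_of_pos (by have : (0:ℝ) ≤ n := Nat.cast_nonneg n; linarith))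

lemma Ks1_nonneg {h s : ℝ} (hh : 0 < h) (hs0 : 0 < s) (hs1 : s < 1) (m : ℤ) :
    0 ≤ Ks1 h s m := by
  rcases eq_or_ne m 0 with rfl | hm
  · simp [Ks1]
  · have h1 : m.natAbs ≠ 0 := by omega
    obtain ⟨n, hn⟩ : ∃ n : ℕ, m.natAbs = n + 1 := ⟨m.natAbs - 1, by omega⟩
    rcases Int.natAbs_eq m with he | he
    · rw [he, hn]
      push_cast
      exact (Ks1_succ_pos hh hs0 hs1 n).le
    · rw [he, Ks1_neg, hn]
      push_cast
      exact (Ks1_succ_pos hh hs0 hs1 n).le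


noncomputable def Bb (h s : ℝ) (n : ℕ) : ℝ :=
  Cc s * (Real.Gamma ((n:ℝ) + 1 - s) / (h ^ (2*s) * Real.Gamma ((n:ℝ) + 1 + s)))

lemma Bb_nonneg {h s : ℝ} (hh : 0 < h) (hs0 : 0 < s) (hs1 : s < 1) (n : ℕ) :
    0 ≤ Bb h s n := by
  have hn : (0:ℝ) ≤ n := Nat.cast_nonneg n
  apply mul_nonneg (Cc_pos hs0 hs1).le
  apply div_nonneg (Real.Gamma_pos_of_pos (by linarith)).le
  exact (mul_pos (Real.rpow_pos_of_pos hh _) (Real.Gamma_pos_of_pos (by linarith))).le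

lemma Ks1_telescope {h s : ℝ} (hh : 0 < h) (hs0 : 0 < s) (hs1 : s < 1) (n : ℕ) :
    2*s * Ks1 h s ((n:ℤ)+1) = Bb h s n - Bb h s (n+1) := by
  have hn : (0:ℝ) ≤ n := Nat.cast_nonneg n
  rw [Ks1_succ_eq]
  unfold Bb
  have g1 : Real.Gamma ((n:ℝ)+1+1+s) = ((n:ℝ)+1+s) * Real.Gamma ((n:ℝ)+1+s) := by
    have h0 : ((n:ℝ)+1+s) ≠ 0 := by positivity
    have := Real.Gamma_add_one h0
    rw [show (n:ℝ)+1+s+1 = (n:ℝ)+1+1+s by ring] at this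
    exact this
  have g2 : Real.Gamma ((n:ℝ)+1+1-s) = ((n:ℝ)+1-s) * Real.Gamma ((n:ℝ)+1-s) := by
    have h0 : ((n:ℝ)+1-s) ≠ 0 := by nlinarith
    have := Real.Gamma_add_one h0
    rw [show (n:ℝ)+1-s+1 = (n:ℝ)+1+1-s by ring] at this
    exact this
  have hΓ1 : Real.Gamma ((n:ℝ)+1+s) ≠ 0 := (Real.Gamma_pos_of_pos (by linarith)).ne'
  have hpow : h ^ (2*s) ≠ 0 := (Real.rpow_pos_of_pos hh _).ne'
  push_cast
  rw [show (n:ℝ)+2+s = (n:ℝ)+1+1+s from by ring, g1, g2]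
  field_simp
  ring

lemma Ks1_ratio {h s : ℝ} (hh : 0 < h) (hs0 : 0 < s) (hs1 : s < 1) (n : ℕ) :
    ((n:ℝ)+2+s) * Ks1 h s ((n:ℤ)+2) = ((n:ℝ)+1-s) * Ks1 h s ((n:ℤ)+1) := by
  have hn : (0:ℝ) ≤ n := Nat.cast_nonneg n
  have e : ((n:ℤ)+2) = (((n+1):ℕ):ℤ)+1 := by push_cast; ring
  rw [e, Ks1_succ_eq, Ks1_succ_eq]
  have g2 : Real.Gamma ((n:ℝ)+1+1-s) = ((n:ℝ)+1-s) * Real.Gamma ((n:ℝ)+1-s) := by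
    have h0 : ((n:ℝ)+1-s) ≠ 0 := by nlinarith
    have := Real.Gamma_add_one h0
    rw [show (n:ℝ)+1-s+1 = (n:ℝ)+1+1-s by ring] at this
    exact this
  have g3 : Real.Gamma ((n:ℝ)+1+2+s) = ((n:ℝ)+2+s) * Real.Gamma ((n:ℝ)+2+s) := by
    have h0 : ((n:ℝ)+2+s) ≠ 0 := by positivity
    have := Real.Gamma_add_one h0
    rw [show (n:ℝ)+2+s+1 = (n:ℝ)+1+2+s by ring] at this
    exact this
  have hΓ2 : Real.Gamma ((n:ℝ)+2+s) ≠ 0 := (Real.Gamma_pos_of_pos (by linarith)).ne'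
  have hpow : h ^ (2*s) ≠ 0 := (Real.rpow_pos_of_pos hh _).ne'
  push_cast
  rw [g2, g3]
  field_simp

lemma summable_Ks1_succ {h s : ℝ} (hh : 0 < h) (hs0 : 0 < s) (hs1 : s < 1) :
    Summable (fun n : ℕ => Ks1 h s ((n:ℤ)+1)) := by
  have h2s : (0:ℝ) < 2*s := by linarith
  apply summable_of_sum_range_le (c := Bb h s 0 / (2*s))
    (fun n => (Ks1_succ_pos hh hs0 hs1 n).le)
  intro n
  have key : ∑ i ∈ Finset.range n, 2*s * Ks1 h s ((i:ℤ)+1) = Bb h s 0 - Bb h s n := by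
    rw [Finset.sum_congr rfl (fun i _ => Ks1_telescope hh hs0 hs1 i)]
    exact Finset.sum_range_sub' (Bb h s) n
  rw [← Finset.mul_sum] at key
  rw [le_div_iff₀ h2s, mul_comm]
  have := Bb_nonneg hh hs0 hs1 n
  linarith

lemma summable_Ks1_nat {h s : ℝ} (hh : 0 < h) (hs0 : 0 < s) (hs1 : s < 1) :
    Summable (fun n : ℕ => Ks1 h s (n:ℤ)) := by
  rw [← summable_nat_add_iff 1]
  have : (fun n : ℕ => Ks1 h s ((n+1 : ℕ):ℤ)) = fun n : ℕ => Ks1 h s ((n:ℤ)+1) := by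
    funext n; push_cast; ring_nf
  rw [this]
  exact summable_Ks1_succ hh hs0 hs1


lemma summable_Ks1_int {h s : ℝ} (hh : 0 < h) (hs0 : 0 < s) (hs1 : s < 1) :
    Summable (fun m : ℤ => Ks1 h s m) := by
  apply Summable.of_nat_of_neg (summable_Ks1_nat hh hs0 hs1)
  simpa [Ks1_neg] using summable_Ks1_nat hh hs0 hs1

noncomputable def cc (h s : ℝ) : ℝ :=
  -(Ks1 h s 2 + Ks1 h s 3) / (Ks1 h s 1 - Ks1 h s 3)

noncomputable def uu (h s : ℝ) : ℤ → ℝ := fun j =>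
  if 3 ≤ j then 1 else if j = 2 then cc h s
  else if j = -2 then -(cc h s) else if j ≤ -3 then -1 else 0

section
variable {h s : ℝ} (hh : 0 < h) (hs0 : 0 < s) (hs1 : s < 1)

lemma injSubLeft (j : ℤ) : Function.Injective (fun m : ℤ => j - m) := by
  intro a b hab
  simp only [sub_right_inj] at hab
  exact hab

lemma uu_odd (j : ℤ) : uu h s (-j) = -uu h s j := by
  unfold uu
  split_ifs <;> first | omega | ring | norm_num

lemma uu_abs_le (j : ℤ) : |uu h s j| ≤ max 1 |cc h s| := by
  unfold uu
  split_ifs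
  · simp
  · exact le_max_right _ _
  · rw [abs_neg]; exact le_max_right _ _
  · simp
  · simp

lemma uu_lb (j : ℤ) (hj : uu h s j ≠ 0) : min 1 |cc h s| ≤ |uu h s j| := by
  revert hj; unfold uu
  split_ifs <;> intro hj
  · simp
  · exact min_le_right _ _
  · rw [abs_neg]; exact min_le_right _ _
  · simp
  · simp at hj

include hh hs0 hs1

lemma K1_pos : 0 < Ks1 h s 1 := by
  have := Ks1_succ_pos hh hs0 hs1 0; norm_num at this; exact this

lemma K2_pos : 0 < Ks1 h s 2 := by
  have := Ks1_succ_pos hh hs0 hs1 1; norm_num at this; exact this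

lemma K3_pos : 0 < Ks1 h s 3 := by
  have := Ks1_succ_pos hh hs0 hs1 2; norm_num at this; exact this

lemma K13_pos : 0 < Ks1 h s 1 - Ks1 h s 3 := by
  have r0 := Ks1_ratio hh hs0 hs1 0
  have r1 := Ks1_ratio hh hs0 hs1 1
  norm_num at r0 r1
  have k1 := K1_pos hh hs0 hs1
  have k2 := K2_pos hh hs0 hs1
  have k3 := K3_pos hh hs0 hs1
  nlinarith

lemma cc_neg : cc h s < 0 := by
  have k2 := K2_pos hh hs0 hs1
  have k3 := K3_pos hh hs0 hs1
  exact div_neg_of_neg_of_pos (by linarith) (K13_pos hh hs0 hs1)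

lemma uu_zero_iff (j : ℤ) : uu h s j = 0 ↔ (j = -1 ∨ j = 0 ∨ j = 1) := by
  have hc : cc h s ≠ 0 := (cc_neg hh hs0 hs1).ne
  unfold uu
  split_ifs <;> simp [hc] <;> omega

lemma summable_F (j : ℤ) :
    Summable (fun m : ℤ => (uu h s j - uu h s m) * Ks1 h s (j - m)) := by
  have hKj : Summable (fun m : ℤ => Ks1 h s (j - m)) :=
    (summable_Ks1_int hh hs0 hs1).comp_injective (injSubLeft j)
  apply Summable.of_norm_bounded (g := fun m => (2 * max 1 |cc h s|) * Ks1 h s (j - m))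
    (hKj.mul_left _)
  intro m
  rw [Real.norm_eq_abs, abs_mul, abs_of_nonneg (Ks1_nonneg hh hs0 hs1 _)]
  apply mul_le_mul_of_nonneg_right _ (Ks1_nonneg hh hs0 hs1 _)
  calc |uu h s j - uu h s m| ≤ |uu h s j| + |uu h s m| := abs_sub _ _
    _ ≤ max 1 |cc h s| + max 1 |cc h s| := add_le_add (uu_abs_le j) (uu_abs_le m)
    _ = 2 * max 1 |cc h s| := by ring

lemma fracLap_bound (j : ℤ) :
    |fracLap1 h s (uu h s) j| ≤ 2 * max 1 |cc h s| * (∑' m : ℤ, Ks1 h s m) := by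
  unfold fracLap1
  have hKj : Summable (fun m : ℤ => Ks1 h s (j - m)) :=
    (summable_Ks1_int hh hs0 hs1).comp_injective (injSubLeft j)
  have hre : ∑' m : ℤ, Ks1 h s (j - m) = ∑' m : ℤ, Ks1 h s m :=
    (Equiv.subLeft j).tsum_eq (fun m => Ks1 h s m)
  have hg : HasSum (fun m : ℤ => 2 * max 1 |cc h s| * Ks1 h s (j - m))
      (2 * max 1 |cc h s| * (∑' m : ℤ, Ks1 h s m)) := by
    rw [← hre]
    exact hKj.hasSum.mul_left _
  have hb : ∀ m : ℤ, ‖(uu h s j - uu h s m) * Ks1 h s (j - m)‖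
      ≤ 2 * max 1 |cc h s| * Ks1 h s (j - m) := by
    intro m
    rw [Real.norm_eq_abs, abs_mul, abs_of_nonneg (Ks1_nonneg hh hs0 hs1 _)]
    apply mul_le_mul_of_nonneg_right _ (Ks1_nonneg hh hs0 hs1 _)
    calc |uu h s j - uu h s m| ≤ |uu h s j| + |uu h s m| := abs_sub _ _
      _ ≤ max 1 |cc h s| + max 1 |cc h s| := add_le_add (uu_abs_le j) (uu_abs_le m)
      _ = 2 * max 1 |cc h s| := by ring
  simpa using tsum_of_norm_bounded hg hb

omit hh hs0 hs1 in
lemma fracLap_neg_arg (j : ℤ) :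
    fracLap1 h s (uu h s) (-j) = -(fracLap1 h s (uu h s) j) := by
  unfold fracLap1
  rw [← tsum_neg]
  calc ∑' m : ℤ, (uu h s (-j) - uu h s m) * Ks1 h s (-j - m)
      = ∑' m : ℤ, (uu h s (-j) - uu h s (-m)) * Ks1 h s (-j - -m) :=
        (((Equiv.neg ℤ).tsum_eq (fun m => (uu h s (-j) - uu h s m) * Ks1 h s (-j - m))).symm)
    _ = ∑' m : ℤ, -((uu h s j - uu h s m) * Ks1 h s (j - m)) := by
        congr 1; funext m
        rw [uu_odd, uu_odd, show -j - -m = -(j - m) by ring, Ks1_neg]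
        ring


lemma fracLap_one : fracLap1 h s (uu h s) 1 = 0 := by
  have hu1 : uu h s 1 = 0 := by unfold uu; norm_num
  have hu0 : uu h s 0 = 0 := by unfold uu; norm_num
  have hu2 : uu h s 2 = cc h s := by unfold uu; norm_num
  have hun1 : uu h s (-1) = 0 := by unfold uu; norm_num
  have hun2 : uu h s (-2) = -(cc h s) := by unfold uu; norm_num
  set c := cc h s with hcdef
  set F : ℤ → ℝ := fun m => (uu h s 1 - uu h s m) * Ks1 h s (1 - m) with hF
  set g : ℕ → ℝ := fun n => Ks1 h s (n:ℤ) with hg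
  have hgsum : Summable g := summable_Ks1_nat hh hs0 hs1
  have hgs : ∀ k : ℕ, Summable (fun n : ℕ => g (n + k)) :=
    fun k => (summable_nat_add_iff k).mpr hgsum
  have hg1 : g 1 = Ks1 h s 1 := by simp [hg]
  have hg2 : g 2 = Ks1 h s 2 := by simp [hg]
  have hg3 : g 3 = Ks1 h s 3 := by simp [hg]
  -- positive side
  have hsum1 : HasSum (fun n : ℕ => F ((n + 3 : ℕ) : ℤ)) (-(∑' k : ℕ, g (k + 2))) := by
    have heq : (fun n : ℕ => F ((n + 3 : ℕ) : ℤ)) = fun n : ℕ => -(g (n + 2)) := by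
      funext n
      have e0 : ((n + 3 : ℕ) : ℤ) = (n:ℤ) + 3 := by push_cast; ring
      have e1 : uu h s ((n:ℤ)+3) = 1 := by unfold uu; rw [if_pos (by omega)]
      have e2 : (1 : ℤ) - ((n:ℤ)+3) = -((n:ℤ)+2) := by ring
      have e3 : ((n + 2 : ℕ) : ℤ) = (n:ℤ)+2 := by push_cast; ring
      rw [hF, hg]
      simp only [e0, e1, e2, Ks1_neg, hu1, e3]
      ring
    rw [heq]
    exact (hgs 2).hasSum.neg
  have hsumpos : HasSum (fun n : ℕ => F (n : ℤ))
      (-(∑' k : ℕ, g (k + 2)) + -(c * g 1)) := by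
    have h3 := (hasSum_nat_add_iff (f := fun n : ℕ => F (n : ℤ)) 3).mp hsum1
    have hr : ∑ i ∈ Finset.range 3, F ((i : ℕ) : ℤ) = -(c * g 1) := by
      rw [Finset.sum_range_succ, Finset.sum_range_succ, Finset.sum_range_one]
      have f0 : F ((0:ℕ):ℤ) = 0 := by
        simp only [hF, show ((0:ℕ):ℤ) = 0 from rfl, hu1, hu0]; ring
      have f1 : F ((1:ℕ):ℤ) = 0 := by
        simp only [hF, show ((1:ℕ):ℤ) = 1 from rfl, hu1]; ring
      have f2 : F ((2:ℕ):ℤ) = -(c * g 1) := by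
        simp only [hF, show ((2:ℕ):ℤ) = 2 from rfl, hu1, hu2,
          show (1:ℤ) - 2 = -1 from by norm_num,
          show Ks1 h s (-1) = Ks1 h s 1 from Ks1_neg h s 1, hg1]
        ring
      rw [f0, f1, f2]; ring
    rwa [hr] at h3
  -- negative side
  have hsum2 : HasSum (fun n : ℕ => F (-(((n + 2 : ℕ) : ℤ) + 1))) (∑' k : ℕ, g (k + 4)) := by
    have heq : (fun n : ℕ => F (-(((n + 2 : ℕ) : ℤ) + 1))) = fun n : ℕ => g (n + 4) := by
      funext n
      have e0 : -(((n + 2 : ℕ) : ℤ) + 1) = -((n:ℤ) + 3) := by push_cast; ring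
      have e1 : uu h s (-((n:ℤ)+3)) = -1 := by
        unfold uu
        rw [if_neg (by omega), if_neg (by omega), if_neg (by omega), if_pos (by omega)]
      have e2 : (1 : ℤ) - -((n:ℤ)+3) = (n:ℤ)+4 := by ring
      have e3 : ((n + 4 : ℕ) : ℤ) = (n:ℤ)+4 := by push_cast; ring
      rw [hF, hg]
      simp only [e0, e1, e2, hu1, e3]
      ring
    rw [heq]
    exact (hgs 4).hasSum
  have hsumneg : HasSum (fun n : ℕ => F (-((n : ℤ) + 1)))
      (∑' k : ℕ, g (k + 4) + c * g 3) := by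
    have h2 := (hasSum_nat_add_iff (f := fun n : ℕ => F (-((n : ℕ) + 1))) 2).mp
      (by exact hsum2)
    have hr : ∑ i ∈ Finset.range 2, F (-(((i : ℕ) : ℤ) + 1)) = c * g 3 := by
      rw [Finset.sum_range_succ, Finset.sum_range_one]
      have f0 : F (-(((0:ℕ):ℤ) + 1)) = 0 := by
        simp only [hF, show -(((0:ℕ):ℤ) + 1) = -1 from by norm_num, hu1, hun1]; ring
      have f1 : F (-(((1:ℕ):ℤ) + 1)) = c * g 3 := by
        simp only [hF, show -(((1:ℕ):ℤ) + 1) = -2 from by norm_num, hu1, hun2,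
          show (1:ℤ) - -2 = 3 from by norm_num, hg3]
        ring
      rw [f0, f1]; ring
    rwa [hr] at h2
  -- combine
  have htot : HasSum F ((-(∑' k : ℕ, g (k + 2)) + -(c * g 1))
      + (∑' k : ℕ, g (k + 4) + c * g 3)) :=
    HasSum.of_nat_of_neg_add_one hsumpos hsumneg
  -- identities
  have B2 := hgsum.sum_add_tsum_nat_add 2
  have B4 := hgsum.sum_add_tsum_nat_add 4
  simp only [Finset.sum_range_succ, Finset.sum_range_zero, zero_add] at B2 B4
  have e24 : ∑' k : ℕ, g (k + 2) = g 2 + (g 3 + ∑' k : ℕ, g (k + 4)) := by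
    have hgg2 : g 2 = Ks1 h s 2 := hg2
    linarith
  have hc13 : c * (g 1 - g 3) = -(g 2 + g 3) := by
    rw [hg1, hg2, hg3, hcdef]
    unfold cc
    rw [div_mul_cancel₀ _ (K13_pos hh hs0 hs1).ne']
  have : fracLap1 h s (uu h s) 1 = ∑' m : ℤ, F m := rfl
  rw [this, htot.tsum_eq, e24]
  linear_combination -hc13

lemma memLs1_uu : memLs1 s (uu h s) := by
  unfold memLs1
  have hp : (0:ℝ) < 1 + 2 * s := by linarith
  have base_nat : Summable (fun n : ℕ => (1 + (n:ℝ)) ^ (-(1 + 2 * s))) := by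
    have h1 : Summable (fun n : ℕ => ((n:ℝ)) ^ (-(1 + 2 * s))) :=
      Real.summable_nat_rpow.mpr (by linarith)
    have h2 := (summable_nat_add_iff 1).mpr h1
    have : (fun n : ℕ => ((n + 1 : ℕ) : ℝ) ^ (-(1 + 2 * s)))
        = fun n : ℕ => (1 + (n:ℝ)) ^ (-(1 + 2 * s)) := by
      funext n; congr 1; push_cast; ring
    rwa [this] at h2
  have base : Summable (fun m : ℤ => (1 + (m.natAbs : ℝ)) ^ (-(1 + 2 * s))) := by
    apply Summable.of_nat_of_neg
    · simpa using base_nat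
    · simpa using base_nat
  apply Summable.of_nonneg_of_le _ _ (base.mul_left (max 1 |cc h s|))
  · intro m; positivity
  · intro m
    apply mul_le_mul_of_nonneg_right (uu_abs_le m)
    positivity

lemma fracLap_zero : fracLap1 h s (uu h s) 0 = 0 := by
  have := fracLap_neg_arg (h := h) (s := s) 0
  simp only [neg_zero] at this
  linarith

lemma fracLap_negone : fracLap1 h s (uu h s) (-1) = 0 := by
  have := fracLap_neg_arg (h := h) (s := s) 1
  rw [fracLap_one hh hs0 hs1] at this
  simpa using this

end
end WUCP1

open WUCP1 in
/-- One-dimensional counterexample to weak unique continuation: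
there are a nontrivial `u ∈ ℓ_s` and a bounded potential `V` with
`(-Δ_d)^s u = V u` on all of `ℤ` and `u = 0` on `{-1,0,1}`. -/
theorem one_dim_failure_WUCP (h s : ℝ) (hh : 0 < h) (hs : s ∈ Set.Ioo (0 : ℝ) 1) :
    ∃ u V : ℤ → ℝ, u ≠ 0 ∧ memLs1 s u ∧ (∃ C : ℝ, ∀ j, |V j| ≤ C) ∧
      (∀ j : ℤ, fracLap1 h s u j = V j * u j) ∧
      (∀ j : ℤ, (j = -1 ∨ j = 0 ∨ j = 1) → u j = 0) := by
  obtain ⟨hs0, hs1⟩ := hs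
  refine ⟨uu h s,
    fun j => if uu h s j = 0 then 0 else fracLap1 h s (uu h s) j / uu h s j,
    ?_, memLs1_uu hh hs0 hs1, ?_, ?_, ?_⟩
  · intro h0
    have h3 : uu h s 3 = 0 := congrFun h0 3
    unfold uu at h3
    norm_num at h3
  · -- boundedness
    have hcn : cc h s ≠ 0 := (cc_neg hh hs0 hs1).ne
    have hmin : (0:ℝ) < min 1 |cc h s| := lt_min one_pos (abs_pos.mpr hcn)
    have hT : (0:ℝ) ≤ ∑' m : ℤ, Ks1 h s m := tsum_nonneg (Ks1_nonneg hh hs0 hs1)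
    have hnum : (0:ℝ) ≤ 2 * max 1 |cc h s| * (∑' m : ℤ, Ks1 h s m) := by
      apply mul_nonneg _ hT
      positivity
    refine ⟨2 * max 1 |cc h s| * (∑' m : ℤ, Ks1 h s m) / min 1 |cc h s|, fun j => ?_⟩
    simp only []
    by_cases hj : uu h s j = 0
    · rw [if_pos hj, abs_zero]
      exact div_nonneg hnum hmin.le
    · rw [if_neg hj, abs_div]
      exact div_le_div₀ hnum (fracLap_bound hh hs0 hs1 j) hmin (uu_lb j hj)
  · -- equation
    intro j
    simp only []
    by_cases hj : uu h s j = 0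
    · rw [if_pos hj, hj, mul_zero]
      rcases (uu_zero_iff hh hs0 hs1 j).mp hj with rfl | rfl | rfl
      · exact fracLap_negone hh hs0 hs1
      · exact fracLap_zero hh hs0 hs1
      · exact fracLap_one hh hs0 hs1
    · rw [if_neg hj, div_mul_cancel₀ _ hj]
  · intro j hj
    rcases hj with rfl | rfl | rfl <;> (unfold uu; norm_num)
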